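/- Under the product-space identification, the Component-Averaged Dykstra iterates x^{(k+1)}_j = (1/l_j) Σ_{i ∈ L_j} (P_{Cᵢ}(x^{(k)} + p^{(k)}_i))_j, p^{(k+1)}_i = x^{(k)} + p^{(k)}_i − P_{Cᵢ}(x^{(k)} + p^{(k)}_i) with x^{(1)} = x, p^{(1)}_i = 0, converge to the weighted projection P^l_C(x) = argmin_{y ∈ C} Σ_j l_j (y_j − x_j)², where C = ∩ᵢ Cᵢ is nonempty. -/

import Mathlib

/-- `l_j = |L_j|`, the number of constraints `i` with `j ∈ Nᵢ`. -/
def lcount {m n : ℕ} (N : Fin m → Finset (Fin n)) (j : Fin n) : ℕ :=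
  (Finset.univ.filter fun i => j ∈ N i).card

namespace CAD
set_option maxHeartbeats 1000000
variable {m n : ℕ}

def ipN (N : Fin m → Finset (Fin n)) (a b : Fin m → Fin n → ℝ) : ℝ :=
  ∑ i, ∑ j ∈ N i, a i j * b i j

lemma ipN_swap (N : Fin m → Finset (Fin n)) (a b : Fin m → Fin n → ℝ) :
    ipN N a b = ∑ j, ∑ i ∈ Finset.univ.filter (fun i => j ∈ N i), a i j * b i j := by
  unfold ipN
  calc ∑ i, ∑ j ∈ N i, a i j * b i j
      = ∑ i : Fin m, ∑ j : Fin n, if j ∈ N i then a i j * b i j else 0 := by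
        refine Finset.sum_congr rfl fun i _ => ?_
        rw [← Finset.sum_filter, Finset.filter_univ_mem]
    _ = ∑ j : Fin n, ∑ i : Fin m, if j ∈ N i then a i j * b i j else 0 := Finset.sum_comm
    _ = _ := by
        refine Finset.sum_congr rfl fun j _ => ?_
        rw [Finset.sum_filter]

lemma ipN_comm (N : Fin m → Finset (Fin n)) (a b : Fin m → Fin n → ℝ) :
    ipN N a b = ipN N b a := by
  unfold ipN
  exact Finset.sum_congr rfl fun i _ => Finset.sum_congr rfl fun j _ => mul_comm _ _

lemma ipN_nonneg (N : Fin m → Finset (Fin n)) (a : Fin m → Fin n → ℝ) : 0 ≤ ipN N a a :=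
  Finset.sum_nonneg fun i _ => Finset.sum_nonneg fun j _ => mul_self_nonneg _

lemma ipN_sub_right (N : Fin m → Finset (Fin n)) (a b c : Fin m → Fin n → ℝ) :
    ipN N a (fun i j => b i j - c i j) = ipN N a b - ipN N a c := by
  unfold ipN
  rw [← Finset.sum_sub_distrib]
  refine Finset.sum_congr rfl fun i _ => ?_
  rw [← Finset.sum_sub_distrib]
  exact Finset.sum_congr rfl fun j _ => by ring

lemma ipN_diag (N : Fin m → Finset (Fin n)) (u v : Fin n → ℝ) :
    ipN N (fun _ j => u j) (fun _ j => v j) = ∑ j, (lcount N j : ℝ) * (u j * v j) := by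
  rw [ipN_swap]
  refine Finset.sum_congr rfl fun j _ => ?_
  rw [Finset.sum_const, lcount, nsmul_eq_mul]

lemma wCS (l u v : Fin n → ℝ) (hl : ∀ j, 0 ≤ l j) :
    (∑ j, l j * (u j * v j))^2 ≤ (∑ j, l j * (u j * u j)) * (∑ j, l j * (v j * v j)) := by
  have h := Finset.sum_mul_sq_le_sq_mul_sq Finset.univ
    (fun j => Real.sqrt (l j) * u j) (fun j => Real.sqrt (l j) * v j)
  have e1 : ∀ j : Fin n, (Real.sqrt (l j) * u j) * (Real.sqrt (l j) * v j) = l j * (u j * v j) := by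
    intro j
    have : Real.sqrt (l j) * Real.sqrt (l j) = l j := Real.mul_self_sqrt (hl j)
    linear_combination (u j * v j) * this
  calc (∑ j, l j * (u j * v j))^2
      = (∑ j, (Real.sqrt (l j) * u j) * (Real.sqrt (l j) * v j))^2 := by
        congr 1; exact (Finset.sum_congr rfl fun j _ => (e1 j)).symm
    _ ≤ (∑ j, (Real.sqrt (l j) * u j)^2) * (∑ j, (Real.sqrt (l j) * v j)^2) := h
    _ = _ := by
        congr 1 <;> refine Finset.sum_congr rfl fun j _ => ?_
        · have h2 := Real.mul_self_sqrt (hl j); linear_combination (u j * u j) * h2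
        · have h2 := Real.mul_self_sqrt (hl j); linear_combination (v j * v j) * h2


variable {N : Fin m → Finset (Fin n)} {C : Fin m → Set (EuclideanSpace ℝ (Fin n))}
  {x0 : EuclideanSpace ℝ (Fin n)} {x : ℕ → EuclideanSpace ℝ (Fin n)}
  {p q : ℕ → Fin m → EuclideanSpace ℝ (Fin n)}

lemma norm_sq_eq (w : EuclideanSpace ℝ (Fin n)) : ‖w‖^2 = ∑ j, (w j)^2 := by
  rw [EuclideanSpace.norm_eq, Real.sq_sqrt (by positivity)]
  exact Finset.sum_congr rfl fun j _ => by rw [Real.norm_eq_abs, sq_abs]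

lemma coord_rec (hprec : ∀ k i, p (k + 1) i = x k + p k i - q k i) :
    ∀ k i j, p (k+1) i j = x k j + p k i j - q k i j := by
  intro k i j; rw [hprec]; simp [PiLp.sub_apply, PiLp.add_apply]

lemma projVI (hconv : ∀ i, Convex ℝ (C i))
    (hq : ∀ k i, q k i ∈ C i ∧ ∀ y ∈ C i, ‖x k + p k i - q k i‖ ≤ ‖x k + p k i - y‖) :
    ∀ k i, ∀ y ∈ C i, ∑ j, (x k j + p k i j - q k i j) * (y j - q k i j) ≤ 0 := by
  intro k i y hy
  set v : EuclideanSpace ℝ (Fin n) := x k + p k i with hv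
  set u : EuclideanSpace ℝ (Fin n) := q k i with hu
  have key : ∀ t : ℝ, 0 < t → t ≤ 1 → 2 * (inner ℝ (v - u) (y - u) : ℝ) ≤ t * ‖y - u‖^2 := by
    intro t ht ht1
    have hmem : (1 - t) • u + t • y ∈ C i := (hconv i) (hq k i).1 hy (by linarith) ht.le (by ring)
    have hle := (hq k i).2 _ hmem
    have hvec : v - ((1 - t) • u + t • y) = (v - u) - t • (y - u) := by
      rw [smul_sub, sub_smul, one_smul]; abel
    have hsq : ‖v - u‖^2 ≤ ‖(v - u) - t • (y - u)‖^2 := by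
      rw [← hvec]; have h0 := norm_nonneg (v - u); nlinarith [hle]
    have e := norm_sub_sq_real (v - u) (t • (y - u))
    rw [real_inner_smul_right, norm_smul, Real.norm_eq_abs, abs_of_pos ht, mul_pow] at e
    rw [e] at hsq
    nlinarith [norm_nonneg (y - u), sq_nonneg t]
  have hip : (inner ℝ (v - u) (y - u) : ℝ) ≤ 0 := by
    by_contra hpos
    push_neg at hpos
    rcases eq_or_lt_of_le (sq_nonneg ‖y - u‖) with hz | hz
    · have := key 1 one_pos le_rfl
      rw [← hz] at this; linarith
    · set t0 : ℝ := min 1 ((inner ℝ (v - u) (y - u) : ℝ) / ‖y - u‖^2) with ht0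
      have htpos : 0 < t0 := lt_min one_pos (div_pos hpos hz)
      have ht1 : t0 ≤ 1 := min_le_left _ _
      have := key t0 htpos ht1
      have h2 : t0 * ‖y - u‖^2 ≤ (inner ℝ (v - u) (y - u) : ℝ) := by
        rw [ht0]
        calc min 1 ((inner ℝ (v - u) (y - u) : ℝ) / ‖y - u‖^2) * ‖y - u‖^2
            ≤ ((inner ℝ (v - u) (y - u) : ℝ) / ‖y - u‖^2) * ‖y - u‖^2 :=
              mul_le_mul_of_nonneg_right (min_le_right _ _) (sq_nonneg _)
          _ = _ := div_mul_cancel₀ _ (ne_of_gt hz)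
      linarith
  have h3 : (inner ℝ (v - u) (y - u) : ℝ)
      = ∑ j, (x k j + p k i j - q k i j) * (y j - q k i j) := by
    rw [hv, hu]
    simp [PiLp.inner_apply, RCLike.inner_apply, starRingEnd_apply, PiLp.sub_apply, PiLp.add_apply]
    exact Finset.sum_congr rfl fun j _ => mul_comm _ _
  rw [h3] at hip; exact hip

lemma qfix (hdep : ∀ i (a b : EuclideanSpace ℝ (Fin n)),
      (∀ j ∈ N i, a j = b j) → (a ∈ C i ↔ b ∈ C i))
    (hq : ∀ k i, q k i ∈ C i ∧ ∀ y ∈ C i, ‖x k + p k i - q k i‖ ≤ ‖x k + p k i - y‖) :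
    ∀ k i j, j ∉ N i → q k i j = x k j + p k i j := by
  classical
  intro k i j hj
  set v : EuclideanSpace ℝ (Fin n) := x k + p k i with hv
  obtain ⟨w, hw⟩ : ∃ w : EuclideanSpace ℝ (Fin n), ∀ j', w j' = if j' ∈ N i then q k i j' else v j' :=
    ⟨WithLp.toLp 2 (fun j' => if j' ∈ N i then q k i j' else v j' : ∀ _ : Fin n, ℝ), fun _ => rfl⟩
  have hwC : w ∈ C i := (hdep i w (q k i) (fun j' hj' => by rw [hw]; exact if_pos hj')).mpr (hq k i).1
  have hle := (hq k i).2 w hwC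
  have h1 : ‖v - q k i‖^2 ≤ ‖v - w‖^2 := by
    have h0 := norm_nonneg (v - q k i); nlinarith [hle]
  rw [norm_sq_eq, norm_sq_eq] at h1
  have hsq : ∑ j', (v j' - q k i j')^2 ≤ ∑ j', (v j' - w j')^2 := by
    simpa [PiLp.sub_apply] using h1
  have hw2 : ∀ j', (v j' - w j')^2 = if j' ∈ N i then (v j' - q k i j')^2 else 0 := by
    intro j'; rw [hw]; split <;> simp
  have h5 : ∑ j', (if j' ∈ N i then (0:ℝ) else (v j' - q k i j')^2) ≤ 0 := by
    have e1 : ∑ j', (v j' - q k i j')^2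
        = ∑ j', ((if j' ∈ N i then (v j' - q k i j')^2 else 0)
            + (if j' ∈ N i then (0:ℝ) else (v j' - q k i j')^2)) :=
      Finset.sum_congr rfl fun j' _ => by split <;> ring
    rw [e1, Finset.sum_add_distrib] at hsq
    have e2 : ∑ j', (v j' - w j')^2 = ∑ j', (if j' ∈ N i then (v j' - q k i j')^2 else 0) :=
      Finset.sum_congr rfl fun j' _ => hw2 j'
    rw [e2] at hsq; linarith
  have h6 := (Finset.sum_eq_zero_iff_of_nonneg (fun j' _ => by split <;> positivity)).mp
    (le_antisymm h5 (Finset.sum_nonneg fun j' _ => by split <;> positivity))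
  have h7 := h6 j (Finset.mem_univ j)
  rw [if_neg hj] at h7
  have h8 : v j - q k i j = 0 := by
    have := sq_eq_zero_iff.mp h7; exact this
  have hva : v j = x k j + p k i j := by rw [hv]; simp [PiLp.add_apply]
  linarith [h8, hva.ge, hva.le]

lemma pout (hp0 : ∀ i, p 0 i = 0)
    (hdep : ∀ i (a b : EuclideanSpace ℝ (Fin n)),
      (∀ j ∈ N i, a j = b j) → (a ∈ C i ↔ b ∈ C i))
    (hq : ∀ k i, q k i ∈ C i ∧ ∀ y ∈ C i, ‖x k + p k i - q k i‖ ≤ ‖x k + p k i - y‖)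
    (hprec : ∀ k i, p (k + 1) i = x k + p k i - q k i) :
    ∀ k i j, j ∉ N i → p k i j = 0 := by
  intro k i j hj
  cases k with
  | zero => rw [hp0 i]; rfl
  | succ k =>
      rw [coord_rec hprec k i j, qfix hdep hq k i j hj]; ring

lemma sumq (hcov : ∀ j, ∃ i, j ∈ N i)
    (hxrec : ∀ k j, x (k + 1) j =
      (∑ i ∈ Finset.univ.filter fun i => j ∈ N i, q k i j) / (lcount N j : ℝ)) :
    ∀ k j, ∑ i ∈ Finset.univ.filter (fun i => j ∈ N i), q k i j = (lcount N j : ℝ) * x (k+1) j := by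
  intro k j
  have hl : (lcount N j : ℝ) ≠ 0 := by
    have h1 : 0 < lcount N j := Finset.card_pos.mpr
      (let ⟨i, hi⟩ := hcov j; ⟨i, Finset.mem_filter.mpr ⟨Finset.mem_univ i, hi⟩⟩)
    exact_mod_cast h1.ne'
  rw [hxrec k j, mul_div_cancel₀ _ hl]

lemma VA (hconv : ∀ i, Convex ℝ (C i))
    (hdep : ∀ i (a b : EuclideanSpace ℝ (Fin n)),
      (∀ j ∈ N i, a j = b j) → (a ∈ C i ↔ b ∈ C i))
    (hp0 : ∀ i, p 0 i = 0)
    (hq : ∀ k i, q k i ∈ C i ∧ ∀ y ∈ C i, ‖x k + p k i - q k i‖ ≤ ‖x k + p k i - y‖)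
    (hprec : ∀ k i, p (k + 1) i = x k + p k i - q k i) :
    ∀ k (Y : Fin m → EuclideanSpace ℝ (Fin n)), (∀ i, Y i ∈ C i) →
    ipN N (fun i j => p (k+1) i j) (fun i j => Y i j - q k i j) ≤ 0 := by
  intro k Y hY
  unfold ipN
  refine Finset.sum_nonpos fun i _ => ?_
  have e : ∑ j ∈ N i, p (k+1) i j * (Y i j - q k i j)
      = ∑ j, (x k j + p k i j - q k i j) * (Y i j - q k i j) := by
    rw [Finset.sum_subset (Finset.subset_univ (N i))
      (fun j _ hj => by rw [pout hp0 hdep hq hprec (k+1) i j hj, zero_mul])]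
    exact Finset.sum_congr rfl fun j _ => by rw [coord_rec hprec k i j]
  rw [e]; exact projVI hconv hq k i (Y i) (hY i)

lemma Rdiag (hcov : ∀ j, ∃ i, j ∈ N i)
    (hxrec : ∀ k j, x (k + 1) j =
      (∑ i ∈ Finset.univ.filter fun i => j ∈ N i, q k i j) / (lcount N j : ℝ)) :
    ∀ k (u : Fin n → ℝ),
    ipN N (fun i j => q k i j - x (k+1) j) (fun _ j => u j) = 0 := by
  intro k u
  rw [ipN_swap]
  refine Finset.sum_eq_zero fun j _ => ?_
  beta_reduce
  rw [← Finset.sum_mul]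
  have e : ∑ i ∈ Finset.univ.filter (fun i => j ∈ N i), (q k i j - x (k+1) j)
      = (∑ i ∈ Finset.univ.filter (fun i => j ∈ N i), q k i j) - (lcount N j : ℝ) * x (k+1) j := by
    rw [Finset.sum_sub_distrib, Finset.sum_const, nsmul_eq_mul]
    rfl
  rw [e, sumq hcov hxrec k j, sub_self, zero_mul]

lemma Qdiag (hcov : ∀ j, ∃ i, j ∈ N i) (hx0 : x 0 = x0) (hp0 : ∀ i, p 0 i = 0)
    (hxrec : ∀ k j, x (k + 1) j =
      (∑ i ∈ Finset.univ.filter fun i => j ∈ N i, q k i j) / (lcount N j : ℝ))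
    (hprec : ∀ k i, p (k + 1) i = x k + p k i - q k i) :
    ∀ k (u : Fin n → ℝ),
    ipN N (fun i j => x0 j - x k j - p k i j) (fun _ j => u j) = 0 := by
  intro k
  induction k with
  | zero =>
      intro u
      have hz : ∀ j, (0 : EuclideanSpace ℝ (Fin n)) j = 0 := fun _ => rfl
      have h0 : ∀ i j, x0 j - x 0 j - p 0 i j = 0 := by
        intro i j; rw [hp0 i, hx0, hz]; ring
      unfold ipN
      refine Finset.sum_eq_zero fun i _ => Finset.sum_eq_zero fun j _ => ?_
      beta_reduce
      rw [h0 i j, zero_mul]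
  | succ k ih =>
      intro u
      have split : ipN N (fun i j => x0 j - x (k+1) j - p (k+1) i j) (fun _ j => u j)
          = ipN N (fun i j => x0 j - x k j - p k i j) (fun _ j => u j)
            + ipN N (fun i j => q k i j - x (k+1) j) (fun _ j => u j) := by
        unfold ipN
        rw [← Finset.sum_add_distrib]
        refine Finset.sum_congr rfl fun i _ => ?_
        rw [← Finset.sum_add_distrib]
        refine Finset.sum_congr rfl fun j _ => ?_
        beta_reduce
        rw [coord_rec hprec k i j]; ring
      rw [split, ih, Rdiag hcov hxrec]; ring

lemma pdiag (hcov : ∀ j, ∃ i, j ∈ N i) (hx0 : x 0 = x0) (hp0 : ∀ i, p 0 i = 0)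
    (hxrec : ∀ k j, x (k + 1) j =
      (∑ i ∈ Finset.univ.filter fun i => j ∈ N i, q k i j) / (lcount N j : ℝ))
    (hprec : ∀ k i, p (k + 1) i = x k + p k i - q k i) :
    ∀ k (u : Fin n → ℝ),
    ipN N (fun i j => p k i j) (fun _ j => u j)
      = ∑ j, (lcount N j : ℝ) * ((x0 j - x k j) * u j) := by
  intro k u
  have hQ := Qdiag hcov hx0 hp0 hxrec hprec k u
  have h1 : ipN N (fun i j => x0 j - x k j - p k i j) (fun _ j => u j)
      = ipN N (fun _ j => x0 j - x k j) (fun _ j => u j)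
        - ipN N (fun i j => p k i j) (fun _ j => u j) := by
    unfold ipN
    rw [← Finset.sum_sub_distrib]
    refine Finset.sum_congr rfl fun i _ => ?_
    rw [← Finset.sum_sub_distrib]
    exact Finset.sum_congr rfl fun j _ => by beta_reduce; ring
  have h2 : ipN N (fun _ j => x0 j - x k j) (fun _ j => u j)
      = ∑ j, (lcount N j : ℝ) * ((x0 j - x k j) * u j) := ipN_diag N _ _
  rw [h1, h2] at hQ
  linarith

lemma G1core (hprec : ∀ k i, p (k + 1) i = x k + p k i - q k i) : ∀ k,
    ipN N (fun _ j => x k j) (fun _ j => x k j)/2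
      + ipN N (fun i j => p k i j) (fun i j => q (k-1) i j)
    = ipN N (fun _ j => x (k+1) j) (fun _ j => x (k+1) j)/2
      + ipN N (fun i j => p (k+1) i j) (fun i j => q k i j)
      + ipN N (fun i j => p (k+1) i j - p k i j) (fun i j => p (k+1) i j - p k i j)/2
      + ipN N (fun i j => q k i j - x (k+1) j) (fun i j => q k i j - x (k+1) j)/2
      + ipN N (fun i j => p k i j) (fun i j => q (k-1) i j - q k i j)
      + ipN N (fun _ j => x (k+1) j) (fun i j => q k i j - x (k+1) j) := by
  intro k
  rw [← sub_eq_zero]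
  unfold ipN
  simp only [Finset.sum_div, ← Finset.sum_add_distrib, ← Finset.sum_sub_distrib]
  refine Finset.sum_eq_zero fun i _ => Finset.sum_eq_zero fun j _ => ?_
  beta_reduce
  rw [coord_rec hprec k i j]; ring

lemma QRstep (hprec : ∀ k i, p (k + 1) i = x k + p k i - q k i) : ∀ k,
    ipN N (fun i j => x0 j - x (k+1) j - p (k+1) i j) (fun i j => x0 j - x (k+1) j - p (k+1) i j)
    = ipN N (fun i j => x0 j - x k j - p k i j) (fun i j => x0 j - x k j - p k i j)
      + 2 * ipN N (fun i j => x0 j - x k j - p k i j) (fun i j => q k i j - x (k+1) j)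
      + ipN N (fun i j => q k i j - x (k+1) j) (fun i j => q k i j - x (k+1) j) := by
  intro k
  rw [← sub_eq_zero]
  unfold ipN
  simp only [Finset.mul_sum, Finset.sum_div, ← Finset.sum_add_distrib, ← Finset.sum_sub_distrib]
  refine Finset.sum_eq_zero fun i _ => Finset.sum_eq_zero fun j _ => ?_
  beta_reduce
  rw [coord_rec hprec k i j]; ring

lemma TAUexp (hprec : ∀ k i, p (k + 1) i = x k + p k i - q k i) :
    ∀ k (z : EuclideanSpace ℝ (Fin n)),
    ipN N (fun i j => p (k+1) i j) (fun i j => q k i j - z j)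
    = ipN N (fun i j => q k i j - x (k+1) j) (fun _ j => x0 j - x (k+1) j)
      + ipN N (fun _ j => x0 j - x (k+1) j) (fun _ j => x (k+1) j - z j)
      - ipN N (fun i j => x0 j - x k j - p k i j) (fun i j => q k i j - x (k+1) j)
      - ipN N (fun i j => x0 j - x k j - p k i j) (fun _ j => x (k+1) j - z j)
      - ipN N (fun i j => q k i j - x (k+1) j) (fun i j => q k i j - x (k+1) j)
      - ipN N (fun i j => q k i j - x (k+1) j) (fun _ j => x (k+1) j - z j) := by
  intro k z
  rw [← sub_eq_zero]
  unfold ipN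
  simp only [Finset.sum_div, ← Finset.sum_add_distrib, ← Finset.sum_sub_distrib]
  refine Finset.sum_eq_zero fun i _ => Finset.sum_eq_zero fun j _ => ?_
  beta_reduce
  rw [coord_rec hprec k i j]; ring

lemma starcore (l a b c : Fin n → ℝ) :
    (∑ j, l j * (a j * a j))/2 + ((∑ j, l j * (b j * b j))/2 - ∑ j, l j * (c j * b j))
    = (∑ j, l j * ((a j - b j) * (a j - b j)))/2 - ∑ j, l j * ((c j - a j) * b j) := by
  rw [← sub_eq_zero]
  simp only [Finset.sum_div, ← Finset.sum_add_distrib, ← Finset.sum_sub_distrib]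
  refine Finset.sum_eq_zero fun j _ => ?_
  beta_reduce
  ring


noncomputable def wq (N : Fin m → Finset (Fin n)) (u v : EuclideanSpace ℝ (Fin n)) : ℝ :=
  ∑ j, (lcount N j : ℝ) * ((u j - v j) * (u j - v j))

noncomputable def cv (N : Fin m → Finset (Fin n)) (x0 y : EuclideanSpace ℝ (Fin n)) : ℝ :=
  (∑ j, (lcount N j : ℝ) * (y j * y j))/2 - ∑ j, (lcount N j : ℝ) * (x0 j * y j)

noncomputable def gs (N : Fin m → Finset (Fin n)) (x : ℕ → EuclideanSpace ℝ (Fin n))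
    (p q : ℕ → Fin m → EuclideanSpace ℝ (Fin n)) (k : ℕ) : ℝ :=
  ipN N (fun _ j => x k j) (fun _ j => x k j)/2
    + ipN N (fun i j => p k i j) (fun i j => q (k-1) i j)

noncomputable def tv (N : Fin m → Finset (Fin n)) (p q : ℕ → Fin m → EuclideanSpace ℝ (Fin n)) (k : ℕ)
    (y : EuclideanSpace ℝ (Fin n)) : ℝ :=
  ipN N (fun i j => p k i j) (fun i j => q (k-1) i j - y j)

noncomputable def rv (N : Fin m → Finset (Fin n)) (p q : ℕ → Fin m → EuclideanSpace ℝ (Fin n)) (k : ℕ) : ℝ :=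
  ipN N (fun i j => p k i j) (fun i j => q (k-1) i j - q k i j)

noncomputable def Rv (N : Fin m → Finset (Fin n)) (x : ℕ → EuclideanSpace ℝ (Fin n))
    (q : ℕ → Fin m → EuclideanSpace ℝ (Fin n)) (k : ℕ) : ℝ :=
  ipN N (fun i j => q k i j - x (k+1) j) (fun i j => q k i j - x (k+1) j)

noncomputable def Pdv (N : Fin m → Finset (Fin n)) (p : ℕ → Fin m → EuclideanSpace ℝ (Fin n)) (k : ℕ) : ℝ :=
  ipN N (fun i j => p (k+1) i j - p k i j) (fun i j => p (k+1) i j - p k i j)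

noncomputable def QRv (N : Fin m → Finset (Fin n)) (x0 : EuclideanSpace ℝ (Fin n))
    (x : ℕ → EuclideanSpace ℝ (Fin n)) (p q : ℕ → Fin m → EuclideanSpace ℝ (Fin n)) (k : ℕ) : ℝ :=
  ipN N (fun i j => x0 j - x k j - p k i j) (fun i j => q k i j - x (k+1) j)

noncomputable def Qv (N : Fin m → Finset (Fin n)) (x0 : EuclideanSpace ℝ (Fin n))
    (x : ℕ → EuclideanSpace ℝ (Fin n)) (p : ℕ → Fin m → EuclideanSpace ℝ (Fin n)) (k : ℕ) : ℝ :=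
  ipN N (fun i j => x0 j - x k j - p k i j) (fun i j => x0 j - x k j - p k i j)

lemma wq_nonneg (N : Fin m → Finset (Fin n)) (u v : EuclideanSpace ℝ (Fin n)) : 0 ≤ wq N u v :=
  Finset.sum_nonneg fun j _ => mul_nonneg (by positivity) (mul_self_nonneg _)

lemma ipN_flip (N : Fin m → Finset (Fin n)) (a b c : Fin m → Fin n → ℝ) :
    ipN N a (fun i j => b i j - c i j) = - ipN N a (fun i j => c i j - b i j) := by
  rw [← sub_eq_zero]
  unfold ipN
  simp only [← Finset.sum_neg_distrib, ← Finset.sum_add_distrib, ← Finset.sum_sub_distrib,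
    sub_neg_eq_add]
  refine Finset.sum_eq_zero fun i _ => Finset.sum_eq_zero fun j _ => ?_
  beta_reduce; ring

lemma dist_sq_eq (u v : EuclideanSpace ℝ (Fin n)) : dist u v ^ 2 = ∑ j, (u j - v j)^2 := by
  rw [EuclideanSpace.dist_eq, Real.sq_sqrt (by positivity)]
  exact Finset.sum_congr rfl fun j _ => by rw [Real.dist_eq, sq_abs]

lemma dist_sq_le_wq {N : Fin m → Finset (Fin n)} (hcov : ∀ j, ∃ i, j ∈ N i)
    (u v : EuclideanSpace ℝ (Fin n)) : dist u v ^ 2 ≤ wq N u v := by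
  rw [dist_sq_eq]
  refine Finset.sum_le_sum fun j _ => ?_
  have h1 : (1:ℝ) ≤ (lcount N j : ℝ) := by
    have : 0 < lcount N j := Finset.card_pos.mpr
      (let ⟨i, hi⟩ := hcov j; ⟨i, Finset.mem_filter.mpr ⟨Finset.mem_univ i, hi⟩⟩)
    exact_mod_cast this
  nlinarith [mul_self_nonneg (u j - v j)]

lemma wq_le_m (N : Fin m → Finset (Fin n)) (u v : EuclideanSpace ℝ (Fin n)) :
    wq N u v ≤ (m : ℝ) * dist u v ^ 2 := by
  rw [dist_sq_eq, Finset.mul_sum]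
  refine Finset.sum_le_sum fun j _ => ?_
  have h1 : (lcount N j : ℝ) ≤ (m : ℝ) := by
    have : lcount N j ≤ m := by
      have := Finset.card_filter_le (Finset.univ : Finset (Fin m)) (fun i => j ∈ N i)
      simpa [lcount] using this
    exact_mod_cast this
  nlinarith [mul_self_nonneg (u j - v j)]

lemma wq_triangle (N : Fin m → Finset (Fin n)) (u v w : EuclideanSpace ℝ (Fin n)) :
    wq N u w ≤ 2 * wq N u v + 2 * wq N v w := by
  unfold wq
  rw [Finset.mul_sum, Finset.mul_sum, ← Finset.sum_add_distrib]
  refine Finset.sum_le_sum fun j _ => ?_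
  have h0 : (0:ℝ) ≤ (lcount N j : ℝ) := by positivity
  nlinarith [sq_nonneg ((u j - v j) - (v j - w j)), h0, sq_nonneg (u j - v j), sq_nonneg (v j - w j)]

lemma wq_expand (N : Fin m → Finset (Fin n)) (u z y : EuclideanSpace ℝ (Fin n)) :
    wq N u y = wq N u z + 2 * (∑ j, (lcount N j : ℝ) * ((u j - z j) * (z j - y j))) + wq N z y := by
  rw [← sub_eq_zero]
  unfold wq
  simp only [Finset.mul_sum, ← Finset.sum_add_distrib, ← Finset.sum_sub_distrib]
  refine Finset.sum_eq_zero fun j _ => ?_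
  beta_reduce; ring

lemma cv_ident (N : Fin m → Finset (Fin n)) (x0 z y : EuclideanSpace ℝ (Fin n)) :
    (∑ j, (lcount N j : ℝ) * (y j - x0 j)^2) - (∑ j, (lcount N j : ℝ) * (z j - x0 j)^2)
      = 2 * (cv N x0 y - cv N x0 z) := by
  rw [← sub_eq_zero]
  unfold cv
  simp only [Finset.mul_sum, Finset.sum_div, ← Finset.sum_add_distrib, ← Finset.sum_sub_distrib,
    mul_sub, sub_sub_eq_add_sub]
  refine Finset.sum_eq_zero fun j _ => ?_
  beta_reduce; ring


lemma L_star (hcov : ∀ j, ∃ i, j ∈ N i) (hx0 : x 0 = x0) (hp0 : ∀ i, p 0 i = 0)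
    (hxrec : ∀ k j, x (k + 1) j =
      (∑ i ∈ Finset.univ.filter fun i => j ∈ N i, q k i j) / (lcount N j : ℝ))
    (hprec : ∀ k i, p (k + 1) i = x k + p k i - q k i) :
    ∀ k (y : EuclideanSpace ℝ (Fin n)),
    gs N x p q k + cv N x0 y = wq N (x k) y / 2 + tv N p q k y := by
  intro k y
  have hs : tv N p q k y
      = ipN N (fun i j => p k i j) (fun i j => q (k-1) i j)
        - ipN N (fun i j => p k i j) (fun _ j => y j) :=
    ipN_sub_right N _ _ _
  have hp : ipN N (fun i j => p k i j) (fun _ j => y j)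
      = ∑ j, (lcount N j : ℝ) * ((x0 j - x k j) * y j) :=
    pdiag hcov hx0 hp0 hxrec hprec k _
  have hd : ipN N (fun _ j => x k j) (fun _ j => x k j)
      = ∑ j, (lcount N j : ℝ) * (x k j * x k j) := ipN_diag N _ _
  have core := starcore (fun j => (lcount N j : ℝ)) (fun j => x k j) (fun j => y j)
    (fun j => x0 j)
  unfold gs cv wq
  beta_reduce at core ⊢
  rw [hs, hd, hp]
  linarith [core]

lemma L_tau_nonneg (hconv : ∀ i, Convex ℝ (C i))
    (hdep : ∀ i (a b : EuclideanSpace ℝ (Fin n)),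
      (∀ j ∈ N i, a j = b j) → (a ∈ C i ↔ b ∈ C i))
    (hp0 : ∀ i, p 0 i = 0)
    (hq : ∀ k i, q k i ∈ C i ∧ ∀ y ∈ C i, ‖x k + p k i - q k i‖ ≤ ‖x k + p k i - y‖)
    (hprec : ∀ k i, p (k + 1) i = x k + p k i - q k i) :
    ∀ k (y : EuclideanSpace ℝ (Fin n)), (∀ i, y ∈ C i) → 0 ≤ tv N p q k y := by
  intro k y hy
  cases k with
  | zero =>
      have h0 : ∀ i (j : Fin n), p 0 i j = 0 := fun i j => by rw [hp0 i]; rfl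
      unfold tv ipN
      refine le_of_eq (Finset.sum_eq_zero fun i _ => Finset.sum_eq_zero fun j _ => ?_).symm
      beta_reduce
      rw [h0 i j, zero_mul]
  | succ k =>
      have h := VA hconv hdep hp0 hq hprec k (fun _ => y) (fun i => hy i)
      have hflip : tv N p q (k+1) y
          = - ipN N (fun i j => p (k+1) i j) (fun i j => y j - q k i j) := by
        unfold tv
        simp only [Nat.add_sub_cancel]
        exact ipN_flip N _ _ _
      rw [hflip]
      linarith

lemma L_rv_nonneg (hconv : ∀ i, Convex ℝ (C i))
    (hdep : ∀ i (a b : EuclideanSpace ℝ (Fin n)),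
      (∀ j ∈ N i, a j = b j) → (a ∈ C i ↔ b ∈ C i))
    (hp0 : ∀ i, p 0 i = 0)
    (hq : ∀ k i, q k i ∈ C i ∧ ∀ y ∈ C i, ‖x k + p k i - q k i‖ ≤ ‖x k + p k i - y‖)
    (hprec : ∀ k i, p (k + 1) i = x k + p k i - q k i) :
    ∀ k, 0 ≤ rv N p q k := by
  intro k
  cases k with
  | zero =>
      have h0 : ∀ i (j : Fin n), p 0 i j = 0 := fun i j => by rw [hp0 i]; rfl
      unfold rv ipN
      refine le_of_eq (Finset.sum_eq_zero fun i _ => Finset.sum_eq_zero fun j _ => ?_).symm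
      beta_reduce
      rw [h0 i j, zero_mul]
  | succ k =>
      have h := VA hconv hdep hp0 hq hprec k (fun i => q (k+1) i) (fun i => (hq (k+1) i).1)
      have hflip : rv N p q (k+1)
          = - ipN N (fun i j => p (k+1) i j) (fun i j => q (k+1) i j - q k i j) := by
        unfold rv
        simp only [Nat.add_sub_cancel]
        exact ipN_flip N _ _ _
      rw [hflip]
      linarith

lemma L_G1 (hcov : ∀ j, ∃ i, j ∈ N i)
    (hxrec : ∀ k j, x (k + 1) j =
      (∑ i ∈ Finset.univ.filter fun i => j ∈ N i, q k i j) / (lcount N j : ℝ))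
    (hprec : ∀ k i, p (k + 1) i = x k + p k i - q k i) :
    ∀ k, gs N x p q k = gs N x p q (k+1) + Pdv N p k / 2 + Rv N x q k / 2 + rv N p q k := by
  intro k
  have h := G1core (N := N) hprec k
  have hz : ipN N (fun _ j => x (k+1) j) (fun i j => q k i j - x (k+1) j) = 0 := by
    rw [ipN_comm]
    exact Rdiag hcov hxrec k _
  unfold gs Pdv Rv rv
  simp only [Nat.add_sub_cancel]
  linarith [h, hz]

lemma L_QRstep (hprec : ∀ k i, p (k + 1) i = x k + p k i - q k i) :
    ∀ k, Qv N x0 x p (k+1) = Qv N x0 x p k + 2 * QRv N x0 x p q k + Rv N x q k := by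
  intro k
  have h := QRstep (N := N) (x0 := x0) hprec k
  unfold Qv QRv Rv
  linarith [h]

lemma L_Q0 (hx0 : x 0 = x0) (hp0 : ∀ i, p 0 i = 0) : Qv N x0 x p 0 = 0 := by
  have hz : ∀ (j : Fin n), (0 : EuclideanSpace ℝ (Fin n)) j = 0 := fun _ => rfl
  unfold Qv ipN
  refine Finset.sum_eq_zero fun i _ => Finset.sum_eq_zero fun j _ => ?_
  beta_reduce
  rw [hp0 i, hx0, hz]
  ring

lemma L_TAU (hcov : ∀ j, ∃ i, j ∈ N i) (hx0 : x 0 = x0) (hp0 : ∀ i, p 0 i = 0)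
    (hxrec : ∀ k j, x (k + 1) j =
      (∑ i ∈ Finset.univ.filter fun i => j ∈ N i, q k i j) / (lcount N j : ℝ))
    (hprec : ∀ k i, p (k + 1) i = x k + p k i - q k i) :
    ∀ k (z : EuclideanSpace ℝ (Fin n)),
    tv N p q (k+1) z = - QRv N x0 x p q k - Rv N x q k
      + ∑ j, (lcount N j : ℝ) * ((x0 j - x (k+1) j) * (x (k+1) j - z j)) := by
  intro k z
  have h := TAUexp (N := N) (x0 := x0) hprec k z
  have h1 : ipN N (fun i j => q k i j - x (k+1) j) (fun _ j => x0 j - x (k+1) j) = 0 :=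
    Rdiag hcov hxrec k _
  have h2 : ipN N (fun _ j => x0 j - x (k+1) j) (fun _ j => x (k+1) j - z j)
      = ∑ j, (lcount N j : ℝ) * ((x0 j - x (k+1) j) * (x (k+1) j - z j)) := ipN_diag N _ _
  have h3 : ipN N (fun i j => x0 j - x k j - p k i j) (fun _ j => x (k+1) j - z j) = 0 :=
    Qdiag hcov hx0 hp0 hxrec hprec k _
  have h4 : ipN N (fun i j => q k i j - x (k+1) j) (fun _ j => x (k+1) j - z j) = 0 :=
    Rdiag hcov hxrec k _
  have h5 : tv N p q (k+1) z = ipN N (fun i j => p (k+1) i j) (fun i j => q k i j - z j) := by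
    unfold tv
    simp only [Nat.add_sub_cancel]
  unfold QRv Rv
  linarith [h, h1, h2, h3, h4, h5]


lemma wq_comm (N : Fin m → Finset (Fin n)) (u v : EuclideanSpace ℝ (Fin n)) :
    wq N u v = wq N v u := by
  unfold wq
  exact Finset.sum_congr rfl fun j _ => by ring

lemma freq_of_partial_bdd {f : ℕ → ℝ} {M : ℝ}
    (h : ∀ K, -M ≤ ∑ k ∈ Finset.range K, f k) {ε : ℝ} (hε : 0 < ε) :
    ∃ᶠ k in Filter.atTop, f k > -ε := by
  rw [Filter.frequently_atTop]
  intro a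
  by_contra hcon
  push_neg at hcon
  set c : ℕ := ⌈(∑ k ∈ Finset.range a, f k + M)/ε⌉₊ + 1 with hc
  set K : ℕ := a + c with hK
  have hKa : a ≤ K := Nat.le_add_right a c
  have hsplit : ∑ k ∈ Finset.range K, f k
      = ∑ k ∈ Finset.range a, f k + ∑ k ∈ Finset.Ico a K, f k := by
    rw [Finset.range_eq_Ico, ← Finset.sum_Ico_consecutive f (Nat.zero_le a) hKa,
      ← Finset.range_eq_Ico]
  have hico : ∑ k ∈ Finset.Ico a K, f k ≤ -(((K - a : ℕ) : ℝ) * ε) := by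
    calc ∑ k ∈ Finset.Ico a K, f k ≤ ∑ _k ∈ Finset.Ico a K, (-ε) :=
          Finset.sum_le_sum fun k hk => hcon k (Finset.mem_Ico.mp hk).1
      _ = ((K - a : ℕ) : ℝ) * (-ε) := by rw [Finset.sum_const, Nat.card_Ico, nsmul_eq_mul]
      _ = -(((K - a : ℕ) : ℝ) * ε) := by ring
  have hcard : K - a = c := by omega
  have hgt : (∑ k ∈ Finset.range a, f k + M)/ε ≤ (⌈(∑ k ∈ Finset.range a, f k + M)/ε⌉₊ : ℝ) :=
    Nat.le_ceil _
  have h2 : ∑ k ∈ Finset.range a, f k + M ≤ (⌈(∑ k ∈ Finset.range a, f k + M)/ε⌉₊ : ℝ) * ε := by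
    rw [div_le_iff₀ hε] at hgt
    exact hgt
  have hce : (∑ k ∈ Finset.range a, f k + M) + ε ≤ ((c : ℕ) : ℝ) * ε := by
    rw [hc]
    push_cast
    linarith
  have hKK := h K
  rw [hsplit] at hKK
  rw [hcard] at hico
  linarith

lemma mem_of_cluster (hcl : ∀ i, IsClosed (C i))
    (hdep : ∀ i (a b : EuclideanSpace ℝ (Fin n)),
      (∀ j ∈ N i, a j = b j) → (a ∈ C i ↔ b ∈ C i))
    (hq : ∀ k i, q k i ∈ C i ∧ ∀ y ∈ C i, ‖x k + p k i - q k i‖ ≤ ‖x k + p k i - y‖)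
    {κ : ℕ → ℕ} {z : EuclideanSpace ℝ (Fin n)}
    (hRk : Filter.Tendsto (fun t => Rv N x q (κ t)) Filter.atTop (nhds 0))
    (hxk : Filter.Tendsto (fun t => x (κ t + 1)) Filter.atTop (nhds z)) :
    ∀ i, z ∈ C i := by
  classical
  intro i
  set W : ℕ → EuclideanSpace ℝ (Fin n) :=
    fun t => WithLp.toLp 2 (fun j => if j ∈ N i then q (κ t) i j else z j : ∀ _ : Fin n, ℝ) with hW
  have hWap : ∀ t j, W t j = if j ∈ N i then q (κ t) i j else z j := fun t j => rfl
  have hWC : ∀ t, W t ∈ C i := fun t =>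
    (hdep i (W t) (q (κ t) i) (fun j hj => by rw [hWap]; exact if_pos hj)).mpr (hq (κ t) i).1
  have hdz : Filter.Tendsto (fun t => dist (x (κ t + 1)) z) Filter.atTop (nhds 0) :=
    tendsto_iff_dist_tendsto_zero.mp hxk
  have hd2 : Filter.Tendsto (fun t => dist (x (κ t + 1)) z ^ 2) Filter.atTop (nhds 0) := by
    have := hdz.mul hdz
    simpa [pow_two] using this
  have hWd : ∀ t, dist (W t) z ^ 2 ≤ 2 * Rv N x q (κ t) + 2 * dist (x (κ t + 1)) z ^ 2 := by
    intro t
    rw [dist_sq_eq]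
    have e0 : ∀ j, (W t j - z j)^2 = if j ∈ N i then (q (κ t) i j - z j)^2 else 0 := by
      intro j; rw [hWap]; split <;> simp
    have e1 : ∑ j, (W t j - z j)^2 = ∑ j ∈ N i, (q (κ t) i j - z j)^2 := by
      rw [Finset.sum_congr rfl fun j _ => e0 j, ← Finset.sum_filter, Finset.filter_univ_mem]
    rw [e1]
    have e2 : ∑ j ∈ N i, (q (κ t) i j - z j)^2
        ≤ ∑ j ∈ N i, (2*(q (κ t) i j - x (κ t + 1) j)^2 + 2*(x (κ t + 1) j - z j)^2) :=
      Finset.sum_le_sum fun j _ => by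
        nlinarith [sq_nonneg ((q (κ t) i j - x (κ t + 1) j) - (x (κ t + 1) j - z j))]
    have e3 : ∑ j ∈ N i, (q (κ t) i j - x (κ t + 1) j)^2 ≤ Rv N x q (κ t) := by
      unfold Rv ipN
      have e3a : ∑ j ∈ N i, (q (κ t) i j - x (κ t + 1) j)^2
          = ∑ j ∈ N i, (q (κ t) i j - x (κ t + 1) j) * (q (κ t) i j - x (κ t + 1) j) :=
        Finset.sum_congr rfl fun j _ => by rw [sq]
      rw [e3a]
      exact Finset.single_le_sum
        (f := fun i' => ∑ j ∈ N i', (q (κ t) i' j - x (κ t + 1) j) * (q (κ t) i' j - x (κ t + 1) j))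
        (fun i' _ => Finset.sum_nonneg fun j _ => mul_self_nonneg _) (Finset.mem_univ i)
    have e4 : ∑ j ∈ N i, (x (κ t + 1) j - z j)^2 ≤ dist (x (κ t + 1)) z ^2 := by
      rw [dist_sq_eq]
      exact Finset.sum_le_sum_of_subset_of_nonneg (Finset.subset_univ _) (fun j _ _ => sq_nonneg _)
    rw [Finset.sum_add_distrib, ← Finset.mul_sum, ← Finset.mul_sum] at e2
    linarith
  have hWt : Filter.Tendsto W Filter.atTop (nhds z) := by
    rw [tendsto_iff_dist_tendsto_zero]
    have hsum : Filter.Tendsto (fun t => 2 * Rv N x q (κ t) + 2 * dist (x (κ t + 1)) z ^ 2)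
        Filter.atTop (nhds 0) := by
      have h1 := hRk.const_mul (2:ℝ)
      have h2 := hd2.const_mul (2:ℝ)
      simpa using h1.add h2
    have hub : Filter.Tendsto
        (fun t => Real.sqrt (2 * Rv N x q (κ t) + 2 * dist (x (κ t + 1)) z ^ 2))
        Filter.atTop (nhds 0) := by
      have := (Real.continuous_sqrt.tendsto 0).comp hsum
      simpa [Function.comp_def] using this
    refine squeeze_zero (fun t => dist_nonneg) (fun t => ?_) hub
    rw [← Real.sqrt_sq (dist_nonneg (x := W t) (y := z))]
    exact Real.sqrt_le_sqrt (hWd t)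
  exact (hcl i).mem_of_tendsto hWt (Filter.Eventually.of_forall hWC)

end CAD

set_option maxHeartbeats 2000000


/-- The Component-Averaged Dykstra iterates
`x^{(k+1)}_j = (1/l_j) ∑_{i ∈ L_j} (P_{Cᵢ}(x^{(k)} + p^{(k)}_i))_j`,
`p^{(k+1)}_i = x^{(k)} + p^{(k)}_i − P_{Cᵢ}(x^{(k)} + p^{(k)}_i)`, started at `x` with
`p^{(1)}_i = 0`, converge to the weighted projection
`P^l_C(x) = argmin_{y ∈ C} ∑_j l_j (y_j − x_j)²`, where `C = ∩ᵢ Cᵢ` is nonempty. -/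
theorem stmt9 {m n : ℕ} (N : Fin m → Finset (Fin n)) (hcov : ∀ j, ∃ i, j ∈ N i)
    (C : Fin m → Set (EuclideanSpace ℝ (Fin n)))
    (hcl : ∀ i, IsClosed (C i)) (hconv : ∀ i, Convex ℝ (C i))
    (hdep : ∀ i (x y : EuclideanSpace ℝ (Fin n)),
      (∀ j ∈ N i, x j = y j) → (x ∈ C i ↔ y ∈ C i))
    (hne : (⋂ i, C i).Nonempty)
    (x0 : EuclideanSpace ℝ (Fin n))
    (x : ℕ → EuclideanSpace ℝ (Fin n))
    (p q : ℕ → Fin m → EuclideanSpace ℝ (Fin n))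
    (hq : ∀ k i, q k i ∈ C i ∧
      ∀ y ∈ C i, ‖x k + p k i - q k i‖ ≤ ‖x k + p k i - y‖)
    (hx0 : x 0 = x0) (hp0 : ∀ i, p 0 i = 0)
    (hxrec : ∀ k j, x (k + 1) j =
      (∑ i ∈ Finset.univ.filter fun i => j ∈ N i, q k i j) / (lcount N j : ℝ))
    (hprec : ∀ k i, p (k + 1) i = x k + p k i - q k i) :
    ∃ z : EuclideanSpace ℝ (Fin n),
      (z ∈ ⋂ i, C i ∧
        ∀ y ∈ ⋂ i, C i,
          ∑ j, (lcount N j : ℝ) * (z j - x0 j) ^ 2 ≤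
            ∑ j, (lcount N j : ℝ) * (y j - x0 j) ^ 2) ∧
      Filter.Tendsto x Filter.atTop (nhds z) := by
  classical
  obtain ⟨yh, hyh⟩ := hne
  have hyhC : ∀ i, yh ∈ C i := fun i => Set.mem_iInter.mp hyh i
  have star := CAD.L_star hcov hx0 hp0 hxrec hprec
  have tau0 := CAD.L_tau_nonneg hconv hdep hp0 hq hprec
  have rv0 := CAD.L_rv_nonneg hconv hdep hp0 hq hprec
  have G1 := CAD.L_G1 hcov hxrec hprec
  have QRs := CAD.L_QRstep (N := N) (x0 := x0) hprec
  have Q00 := CAD.L_Q0 (N := N) hx0 hp0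
  have TAU := CAD.L_TAU hcov hx0 hp0 hxrec hprec
  set g : ℕ → ℝ := CAD.gs N x p q with hgdef
  have Rnn : ∀ k, 0 ≤ CAD.Rv N x q k := fun k => CAD.ipN_nonneg N _
  have Pnn : ∀ k, 0 ≤ CAD.Pdv N p k := fun k => CAD.ipN_nonneg N _
  have Qnn : ∀ k, 0 ≤ CAD.Qv N x0 x p k := fun k => CAD.ipN_nonneg N _
  have wnn : ∀ u v : EuclideanSpace ℝ (Fin n), 0 ≤ CAD.wq N u v := CAD.wq_nonneg N
  have hlb : ∀ k, -(CAD.cv N x0 yh) ≤ g k := by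
    intro k
    have h1 := star k yh
    have h2 := tau0 k yh hyhC
    have h3 := wnn (x k) yh
    linarith
  have hmono : ∀ k, g (k+1) ≤ g k := by
    intro k
    have h1 := G1 k
    have h2 := Rnn k
    have h3 := Pnn k
    have h4 := rv0 k
    linarith
  have hanti : Antitone g := antitone_nat_of_succ_le hmono
  have hbdd : BddBelow (Set.range g) := ⟨-(CAD.cv N x0 yh), by rintro r ⟨k, rfl⟩; exact hlb k⟩
  have hgt : Filter.Tendsto g Filter.atTop (nhds (⨅ k, g k)) := tendsto_atTop_ciInf hanti hbdd
  set M : ℝ := g 0 + CAD.cv N x0 yh with hM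
  have hM0 : 0 ≤ M := by have := hlb 0; rw [hM]; linarith
  have hRpart : ∀ K, ∑ k ∈ Finset.range K, CAD.Rv N x q k ≤ 2*M := by
    intro K
    have htel : ∑ k ∈ Finset.range K, (g k - g (k+1)) = g 0 - g K := Finset.sum_range_sub' g K
    have hterm : ∀ k ∈ Finset.range K, CAD.Rv N x q k / 2 ≤ g k - g (k+1) := by
      intro k _
      have h1 := G1 k
      have h3 := Pnn k
      have h4 := rv0 k
      linarith
    have hsum2 : ∑ k ∈ Finset.range K, CAD.Rv N x q k / 2 ≤ g 0 - g K :=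
      htel ▸ Finset.sum_le_sum hterm
    rw [← Finset.sum_div] at hsum2
    have := hlb K
    rw [hM]
    linarith
  have hRsummable : Summable (CAD.Rv N x q) := summable_of_sum_range_le Rnn hRpart
  have hRto0 : Filter.Tendsto (CAD.Rv N x q) Filter.atTop (nhds 0) :=
    hRsummable.tendsto_atTop_zero
  have hQRpart : ∀ K, -M ≤ ∑ k ∈ Finset.range K, CAD.QRv N x0 x p q k := by
    intro K
    have htel : ∑ k ∈ Finset.range K, (CAD.Qv N x0 x p (k+1) - CAD.Qv N x0 x p k)
        = CAD.Qv N x0 x p K - CAD.Qv N x0 x p 0 := Finset.sum_range_sub _ K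
    have he : ∀ k ∈ Finset.range K, CAD.Qv N x0 x p (k+1) - CAD.Qv N x0 x p k
        = 2 * CAD.QRv N x0 x p q k + CAD.Rv N x q k := by
      intro k _
      have := QRs k
      linarith
    rw [Finset.sum_congr rfl he, Finset.sum_add_distrib, ← Finset.mul_sum, Q00] at htel
    have h1 := hRpart K
    have h2 := Qnn K
    linarith
  have hfreq : ∀ t : ℕ, ∃ᶠ k in Filter.atTop, CAD.QRv N x0 x p q k > -(1/(t+1)) := by
    intro t
    exact CAD.freq_of_partial_bdd hQRpart (by positivity)
  obtain ⟨φ, hφm, hφ⟩ := Filter.extraction_forall_of_frequently hfreq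
  have hxball : ∀ k, x k ∈ Metric.closedBall yh (Real.sqrt (2*M)) := by
    intro k
    have h1 := star k yh
    have h2 := tau0 k yh hyhC
    have h3 : CAD.wq N (x k) yh ≤ 2*M := by
      have h5 := hanti (Nat.zero_le k)
      rw [hM]
      linarith
    have h4 : dist (x k) yh ^2 ≤ 2*M := le_trans (CAD.dist_sq_le_wq hcov (x k) yh) h3
    have h5 : dist (x k) yh ≤ Real.sqrt (2*M) := by
      rw [← Real.sqrt_sq dist_nonneg]
      exact Real.sqrt_le_sqrt h4
    exact Metric.mem_closedBall.mpr h5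
  obtain ⟨z, hzball, ψ, hψm, hψt⟩ :=
    (isCompact_closedBall yh (Real.sqrt (2*M))).tendsto_subseq (fun t => hxball (φ t + 1))
  have hseq : Filter.Tendsto (fun t => x (φ (ψ t) + 1)) Filter.atTop (nhds z) := by
    exact hψt
  have hdz : Filter.Tendsto (fun t => dist (x (φ (ψ t) + 1)) z) Filter.atTop (nhds 0) :=
    tendsto_iff_dist_tendsto_zero.mp hseq
  have hdz2 : Filter.Tendsto (fun t => dist (x (φ (ψ t) + 1)) z ^ 2) Filter.atTop (nhds 0) := by
    have := hdz.mul hdz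
    simpa [pow_two] using this
  have hκm : StrictMono (fun t => φ (ψ t)) := hφm.comp hψm
  have hRk : Filter.Tendsto (fun t => CAD.Rv N x q (φ (ψ t))) Filter.atTop (nhds 0) :=
    hRto0.comp hκm.tendsto_atTop
  have hQRk : ∀ t : ℕ, -(1/((t:ℝ)+1)) < CAD.QRv N x0 x p q (φ (ψ t)) := by
    intro t
    have h1 := hφ (ψ t)
    have h2 : (1:ℝ)/((ψ t : ℝ)+1) ≤ 1/((t:ℝ)+1) := by
      apply one_div_le_one_div_of_le (by positivity)
      have h3 : t ≤ ψ t := hψm.le_apply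
      have h4 : (t:ℝ) ≤ (ψ t : ℝ) := by exact_mod_cast h3
      linarith
    have h5 : -(1/((ψ t : ℝ)+1)) < CAD.QRv N x0 x p q (φ (ψ t)) := by
      have := h1
      push_cast at this ⊢
      convert this using 2
    linarith
  have hzC : ∀ i, z ∈ C i := CAD.mem_of_cluster hcl hdep hq hRk hseq
  have hzCap : z ∈ ⋂ i, C i := Set.mem_iInter.mpr hzC
  -- wq along subsequence tends to 0
  have hwqk : Filter.Tendsto (fun t => CAD.wq N (x (φ (ψ t) + 1)) z) Filter.atTop (nhds 0) := by
    have hub : Filter.Tendsto (fun t => (m:ℝ) * dist (x (φ (ψ t) + 1)) z ^ 2)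
        Filter.atTop (nhds 0) := by simpa using hdz2.const_mul (m:ℝ)
    exact squeeze_zero (fun t => wnn _ _) (fun t => CAD.wq_le_m N _ _) hub
  -- cross term tends to 0
  have hwbd : ∀ k, CAD.wq N x0 (x k) ≤ 2*CAD.wq N x0 yh + 4*M := by
    intro k
    have h1 := CAD.wq_triangle N x0 yh (x k)
    have h2 : CAD.wq N yh (x k) ≤ 2*M := by
      rw [CAD.wq_comm]
      have h3 := star k yh
      have h4 := tau0 k yh hyhC
      have h5 := hanti (Nat.zero_le k)
      rw [hM]
      linarith
    linarith
  have hwterm : Filter.Tendsto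
      (fun t => ∑ j, (lcount N j : ℝ) *
        ((x0 j - x (φ (ψ t) + 1) j) * (x (φ (ψ t) + 1) j - z j))) Filter.atTop (nhds 0) := by
    set B : ℝ := 2*CAD.wq N x0 yh + 4*M with hB
    have hB0 : 0 ≤ B := by
      rw [hB]
      have := wnn x0 yh
      linarith
    have hsq : ∀ t, (∑ j, (lcount N j : ℝ) *
        ((x0 j - x (φ (ψ t) + 1) j) * (x (φ (ψ t) + 1) j - z j)))^2
        ≤ B * CAD.wq N (x (φ (ψ t) + 1)) z := by
      intro t
      have hcs : (∑ j, (lcount N j : ℝ) *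
          ((x0 j - x (φ (ψ t) + 1) j) * (x (φ (ψ t) + 1) j - z j)))^2
          ≤ CAD.wq N x0 (x (φ (ψ t) + 1)) * CAD.wq N (x (φ (ψ t) + 1)) z :=
        CAD.wCS (fun j => (lcount N j : ℝ)) (fun j => x0 j - x (φ (ψ t) + 1) j)
          (fun j => x (φ (ψ t) + 1) j - z j) (fun j => by positivity)
      have h2 := mul_le_mul_of_nonneg_right (hwbd (φ (ψ t) + 1)) (wnn (x (φ (ψ t) + 1)) z)
      calc _ ≤ CAD.wq N x0 (x (φ (ψ t) + 1)) * CAD.wq N (x (φ (ψ t) + 1)) z := hcs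
        _ ≤ B * CAD.wq N (x (φ (ψ t) + 1)) z := h2
    have habs : Filter.Tendsto (fun t => |∑ j, (lcount N j : ℝ) *
        ((x0 j - x (φ (ψ t) + 1) j) * (x (φ (ψ t) + 1) j - z j))|) Filter.atTop (nhds 0) := by
      have hub : Filter.Tendsto (fun t => Real.sqrt (B * CAD.wq N (x (φ (ψ t) + 1)) z))
          Filter.atTop (nhds 0) := by
        have h1 : Filter.Tendsto (fun t => B * CAD.wq N (x (φ (ψ t) + 1)) z)
            Filter.atTop (nhds 0) := by simpa using hwqk.const_mul B
        have := (Real.continuous_sqrt.tendsto 0).comp h1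
        simpa [Function.comp_def] using this
      refine squeeze_zero (fun t => abs_nonneg _) (fun t => ?_) hub
      rw [← Real.sqrt_sq_eq_abs]
      exact Real.sqrt_le_sqrt (hsq t)
    have hlo := habs.neg
    rw [neg_zero] at hlo
    refine tendsto_of_tendsto_of_tendsto_of_le_of_le hlo habs
      (fun t => neg_abs_le _) (fun t => le_abs_self _)
  -- identification of the limit of g
  have hginfz : (⨅ k, g k) + CAD.cv N x0 z = 0 := by
    have htendg : Filter.Tendsto (fun t => g (φ (ψ t) + 1) + CAD.cv N x0 z)
        Filter.atTop (nhds ((⨅ k, g k) + CAD.cv N x0 z)) := by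
      have h1 : Filter.Tendsto (fun t => φ (ψ t) + 1) Filter.atTop Filter.atTop :=
        Filter.tendsto_atTop_mono (fun t => Nat.le_succ _) hκm.tendsto_atTop
      exact (hgt.comp h1).add_const _
    have hlow : ∀ t, 0 ≤ g (φ (ψ t) + 1) + CAD.cv N x0 z := by
      intro t
      have h1 := star (φ (ψ t) + 1) z
      have h2 := tau0 (φ (ψ t) + 1) z hzC
      have h3 := wnn (x (φ (ψ t) + 1)) z
      linarith
    have hup : ∀ t, g (φ (ψ t) + 1) + CAD.cv N x0 z
        ≤ CAD.wq N (x (φ (ψ t) + 1)) z / 2 + 1/((t:ℝ)+1)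
          + ∑ j, (lcount N j : ℝ) *
            ((x0 j - x (φ (ψ t) + 1) j) * (x (φ (ψ t) + 1) j - z j)) := by
      intro t
      have h1 := star (φ (ψ t) + 1) z
      have h2 := TAU (φ (ψ t)) z
      have h3 := hQRk t
      have h4 := Rnn (φ (ψ t))
      linarith
    have hupt : Filter.Tendsto (fun t => CAD.wq N (x (φ (ψ t) + 1)) z / 2 + 1/((t:ℝ)+1)
          + ∑ j, (lcount N j : ℝ) *
            ((x0 j - x (φ (ψ t) + 1) j) * (x (φ (ψ t) + 1) j - z j)))
        Filter.atTop (nhds 0) := by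
      have h1 : Filter.Tendsto (fun t => CAD.wq N (x (φ (ψ t) + 1)) z / 2)
          Filter.atTop (nhds 0) := by simpa using hwqk.div_const 2
      have h2 : Filter.Tendsto (fun t : ℕ => 1/((t:ℝ)+1)) Filter.atTop (nhds 0) :=
        tendsto_one_div_add_atTop_nhds_zero_nat
      have := (h1.add h2).add hwterm
      simpa using this
    have hge : 0 ≤ (⨅ k, g k) + CAD.cv N x0 z :=
      ge_of_tendsto htendg (Filter.Eventually.of_forall hlow)
    have hle : (⨅ k, g k) + CAD.cv N x0 z ≤ 0 :=
      le_of_tendsto_of_tendsto' htendg hupt hup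
    linarith
  -- full convergence
  have hwqfull : Filter.Tendsto (fun k => CAD.wq N (x k) z) Filter.atTop (nhds 0) := by
    have hub : Filter.Tendsto (fun k => 2*(g k + CAD.cv N x0 z)) Filter.atTop (nhds 0) := by
      have h1 := (hgt.add_const (CAD.cv N x0 z)).const_mul (2:ℝ)
      rw [hginfz] at h1
      simpa using h1
    refine squeeze_zero (fun k => wnn _ _) (fun k => ?_) hub
    have h1 := star k z
    have h2 := tau0 k z hzC
    linarith
  have hxz : Filter.Tendsto x Filter.atTop (nhds z) := by
    rw [tendsto_iff_dist_tendsto_zero]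
    have hub : Filter.Tendsto (fun k => Real.sqrt (CAD.wq N (x k) z)) Filter.atTop (nhds 0) := by
      have := (Real.continuous_sqrt.tendsto 0).comp hwqfull
      simpa [Function.comp_def] using this
    refine squeeze_zero (fun k => dist_nonneg) (fun k => ?_) hub
    rw [← Real.sqrt_sq (dist_nonneg (x := x k) (y := z))]
    exact Real.sqrt_le_sqrt (CAD.dist_sq_le_wq hcov (x k) z)
  refine ⟨z, ⟨hzCap, ?_⟩, hxz⟩
  intro y hy
  have hyC : ∀ i, y ∈ C i := fun i => Set.mem_iInter.mp hy i
  -- limit inequality for y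
  have hdecomp : ∀ k, CAD.wq N (x k) y = CAD.wq N (x k) z
      + 2 * (∑ j, (lcount N j : ℝ) * ((x k j - z j) * (z j - y j))) + CAD.wq N z y :=
    fun k => CAD.wq_expand N (x k) z y
  have hmid : Filter.Tendsto (fun k => ∑ j, (lcount N j : ℝ) * ((x k j - z j) * (z j - y j)))
      Filter.atTop (nhds 0) := by
    have hsq : ∀ k, (∑ j, (lcount N j : ℝ) * ((x k j - z j) * (z j - y j)))^2
        ≤ CAD.wq N z y * CAD.wq N (x k) z := by
      intro k
      have hcs : (∑ j, (lcount N j : ℝ) * ((x k j - z j) * (z j - y j)))^2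
          ≤ CAD.wq N (x k) z * CAD.wq N z y :=
        CAD.wCS (fun j => (lcount N j : ℝ)) (fun j => x k j - z j)
          (fun j => z j - y j) (fun j => by positivity)
      linarith [hcs]
    have habs : Filter.Tendsto
        (fun k => |∑ j, (lcount N j : ℝ) * ((x k j - z j) * (z j - y j))|)
        Filter.atTop (nhds 0) := by
      have hub : Filter.Tendsto (fun k => Real.sqrt (CAD.wq N z y * CAD.wq N (x k) z))
          Filter.atTop (nhds 0) := by
        have h1 : Filter.Tendsto (fun k => CAD.wq N z y * CAD.wq N (x k) z)
            Filter.atTop (nhds 0) := by simpa using hwqfull.const_mul (CAD.wq N z y)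
        have := (Real.continuous_sqrt.tendsto 0).comp h1
        simpa [Function.comp_def] using this
      refine squeeze_zero (fun k => abs_nonneg _) (fun k => ?_) hub
      rw [← Real.sqrt_sq_eq_abs]
      exact Real.sqrt_le_sqrt (hsq k)
    have hlo := habs.neg
    rw [neg_zero] at hlo
    exact tendsto_of_tendsto_of_tendsto_of_le_of_le hlo habs
      (fun k => neg_abs_le _) (fun k => le_abs_self _)
  have hwy : Filter.Tendsto (fun k => CAD.wq N (x k) y) Filter.atTop (nhds (CAD.wq N z y)) := by
    have h1 := (hwqfull.add (hmid.const_mul 2)).add_const (CAD.wq N z y)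
    have h2 : ∀ k, CAD.wq N (x k) z + 2 * (∑ j, (lcount N j : ℝ) *
        ((x k j - z j) * (z j - y j))) + CAD.wq N z y = CAD.wq N (x k) y :=
      fun k => (hdecomp k).symm
    rw [show (0:ℝ) + 2*0 + CAD.wq N z y = CAD.wq N z y by ring] at h1
    exact h1.congr h2
  have hglim : Filter.Tendsto (fun k => g k + CAD.cv N x0 y) Filter.atTop
      (nhds ((⨅ k, g k) + CAD.cv N x0 y)) := hgt.add_const _
  have hchain : ∀ k, CAD.wq N (x k) y / 2 ≤ g k + CAD.cv N x0 y := by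
    intro k
    have h1 := star k y
    have h2 := tau0 k y hyC
    linarith
  have hfin : CAD.wq N z y / 2 ≤ (⨅ k, g k) + CAD.cv N x0 y :=
    le_of_tendsto_of_tendsto' (hwy.div_const 2) hglim hchain
  have hident := CAD.cv_ident N x0 z y
  have hwzy := wnn z y
  linarith [hfin, hginfz, hident, hwzy]
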